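/- Let (Σ,μ) be a σ-finite measure space, 1 ≤ p < ∞, and let Ω be a contractive, quasi-linear L∞-centralizer on L_p(μ) with centralizer constant C(Ω). Then for every finite family v_1,…,v_n of normalized pairwise disjointly supported functions in L_p(μ) one has ‖Ω(Σ_{i=1}^n v_i) − Σ_{i=1}^n Ω(v_i)‖_p ≤ C(Ω)·‖Σ_{i=1}^n v_i‖_p + ∇_{[(v_1,…,v_n)]}Ω. -/

import Mathlib

open MeasureTheory
open scoped ENNReal

noncomputable section

section L0Defs

variable {α : Type*} [MeasurableSpace α] {μ : Measure α} {q : ℝ≥0∞}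

/-- Two elements of `L_p(μ)` are disjointly supported (up to null sets). -/
def DisjSupp (f g : Lp ℝ q μ) : Prop := ∀ᵐ a ∂μ, f a = 0 ∨ g a = 0

/-- `Ω : L_p(μ) → L⁰(μ)` is trivial on a subspace `E`: some (possibly discontinuous) linear
map `L : E → L⁰` satisfies that `Ω - L` takes values in `L_p` on `E` and is bounded there. -/
def L0TrivialOn (Ω : Lp ℝ q μ → (α →ₘ[μ] ℝ)) (E : Submodule ℝ (Lp ℝ q μ)) : Prop :=
  ∃ (L : E →ₗ[ℝ] (α →ₘ[μ] ℝ)) (C : ℝ), 0 ≤ C ∧ ∀ x : E,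
    eLpNorm (⇑(Ω x - L x)) q μ ≤ ENNReal.ofReal (C * ‖(x : Lp ℝ q μ)‖)

/-- `Ω : L_p(μ) → L⁰(μ)` is an `L_∞`-centralizer with constant `C`: it is homogeneous and,
whenever `y = f·x` in `L⁰` with `f ∈ L_∞` and `x ∈ L_p`, the difference `Ω(f x) - f·Ω(x)`
has `L_p`-norm at most `C‖f‖_∞‖x‖_p` (in particular it lies in `L_p`). -/
def IsCentralizerWith (Ω : Lp ℝ q μ → (α →ₘ[μ] ℝ)) (C : ℝ) : Prop :=
  (∀ (c : ℝ) (x : Lp ℝ q μ), Ω (c • x) = c • Ω x) ∧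
    ∀ f : α →ₘ[μ] ℝ, f ∈ Lp ℝ ⊤ μ → ∀ x y : Lp ℝ q μ, (y : α →ₘ[μ] ℝ) = f * ↑x →
      eLpNorm (⇑(Ω y - f * Ω x)) q μ ≤
        ENNReal.ofReal (C * (eLpNorm (⇑f) ⊤ μ).toReal * ‖x‖)

/-- `Ω` is quasi-linear as a map with values in `L⁰` relative to the `L_p` norm. -/
def L0QuasiLinear (Ω : Lp ℝ q μ → (α →ₘ[μ] ℝ)) : Prop :=
  ∃ Q : ℝ, 0 ≤ Q ∧ ∀ x y : Lp ℝ q μ,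
    eLpNorm (⇑(Ω (x + y) - Ω x - Ω y)) q μ ≤ ENNReal.ofReal (Q * (‖x‖ + ‖y‖))

/-- `Ω` is contractive: `supp Ω(x) ⊆ supp x` a.e. -/
def Contractive (Ω : Lp ℝ q μ → (α →ₘ[μ] ℝ)) : Prop :=
  ∀ x : Lp ℝ q μ, ∀ᵐ a ∂μ, x a = 0 → Ω x a = 0

/-- `Ω` is disjointly singular: its restriction to the closed linear span of every sequence
of nonzero pairwise disjointly supported elements is not trivial. -/
def L0DisjointlySingular [Fact (1 ≤ q)] (Ω : Lp ℝ q μ → (α →ₘ[μ] ℝ)) : Prop :=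
  ∀ u : ℕ → Lp ℝ q μ, (∀ n, u n ≠ 0) → Pairwise (fun i j => DisjSupp (u i) (u j)) →
    ¬ L0TrivialOn Ω (Submodule.span ℝ (Set.range u)).topologicalClosure

/-- The average `∇_{[b]}Ω` over all choices of signs of
`‖Ω (∑ ± b_k) - ∑ ± Ω(b_k)‖_p` (computed in `ℝ≥0∞`). -/
def nabla (Ω : Lp ℝ q μ → (α →ₘ[μ] ℝ)) {n : ℕ} (b : Fin n → Lp ℝ q μ) : ℝ≥0∞ :=
  (2 ^ n : ℝ≥0∞)⁻¹ * ∑ ε : Fin n → Bool,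
    eLpNorm (⇑(Ω (∑ k, (if ε k then (1:ℝ) else -1) • b k)
      - ∑ k, (if ε k then (1:ℝ) else -1) • Ω (b k))) q μ

end L0Defs

section Aux

variable {α : Type*} [MeasurableSpace α] {μ : Measure α} {q : ℝ≥0∞}

private lemma lp_coeFn_sum {ι : Type*} (s : Finset ι) (f : ι → Lp ℝ q μ) :
    ⇑(∑ i ∈ s, f i) =ᵐ[μ] fun a => ∑ i ∈ s, f i a := by
  classical
  induction s using Finset.induction_on with
  | empty => simp only [Finset.sum_empty]; exact Lp.coeFn_zero (E := ℝ) (p := q) (μ := μ)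
  | insert i t hi ih =>
    simp only [Finset.sum_insert hi]
    filter_upwards [Lp.coeFn_add (f i) (∑ j ∈ t, f j), ih] with a h1 h2
    simp only [h1, Pi.add_apply, h2]

private lemma aeeqfun_coeFn_sum {ι : Type*} (s : Finset ι) (f : ι → (α →ₘ[μ] ℝ)) :
    ⇑(∑ i ∈ s, f i) =ᵐ[μ] fun a => ∑ i ∈ s, f i a := by
  classical
  induction s using Finset.induction_on with
  | empty => simp only [Finset.sum_empty]; exact AEEqFun.coeFn_zero (β := ℝ) (μ := μ)
  | insert i t hi ih =>
    simp only [Finset.sum_insert hi]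
    filter_upwards [AEEqFun.coeFn_add (f i) (∑ j ∈ t, f j), ih] with a h1 h2
    simp only [h1, Pi.add_apply, h2]

/-- The sign function attached to a choice of signs. -/
private def sgn {n : ℕ} (ε : Fin n → Bool) (k : Fin n) : ℝ := if ε k then 1 else -1

private lemma sgn_cases {n : ℕ} (ε : Fin n → Bool) (k : Fin n) :
    sgn ε k = 1 ∨ sgn ε k = -1 := by
  by_cases h : ε k <;> simp [sgn, h]

private lemma sgn_mul_self {n : ℕ} (ε : Fin n → Bool) (k : Fin n) :
    sgn ε k * sgn ε k = 1 := by
  rcases sgn_cases ε k with h | h <;> simp [h]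

private lemma abs_sgn {n : ℕ} (ε : Fin n → Bool) (k : Fin n) : ‖sgn ε k‖ = 1 := by
  rcases sgn_cases ε k with h | h <;> simp [h]

private lemma nabla_eq (Ω : Lp ℝ q μ → (α →ₘ[μ] ℝ)) {n : ℕ} (b : Fin n → Lp ℝ q μ) :
    nabla Ω b = (2 ^ n : ℝ≥0∞)⁻¹ * ∑ ε : Fin n → Bool,
      eLpNorm (⇑(Ω (∑ k, sgn ε k • b k) - ∑ k, sgn ε k • Ω (b k))) q μ := rfl

end Aux

/-- For a contractive quasi-linear `L_∞`-centralizer `Ω` on `L_p(μ)`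
with centralizer constant `CΩ` and any finite normalized disjointly supported family
`v_1, …, v_n`, one has `‖Ω(∑ v_i) - ∑ Ω(v_i)‖_p ≤ CΩ·‖∑ v_i‖_p + ∇_{[(v_i)]}Ω`. -/
theorem eLpNorm_omega_sum_le_nabla
    {α : Type*} [MeasurableSpace α] {μ : Measure α} [SigmaFinite μ]
    {q : ℝ≥0∞} [Fact (1 ≤ q)] (hq : q ≠ ∞)
    (Ω : Lp ℝ q μ → (α →ₘ[μ] ℝ)) (CΩ : ℝ)
    (hcen : IsCentralizerWith Ω CΩ) (hql : L0QuasiLinear Ω) (hcontr : Contractive Ω)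
    (n : ℕ) (v : Fin n → Lp ℝ q μ) (hnorm : ∀ i, ‖v i‖ = 1)
    (hdisj : Pairwise (fun i j => DisjSupp (v i) (v j))) :
    eLpNorm (⇑(Ω (∑ i, v i) - ∑ i, Ω (v i))) q μ ≤
      ENNReal.ofReal (CΩ * ‖∑ i, v i‖) + nabla Ω v := by
  classical
  have hq1 : (1:ℝ≥0∞) ≤ q := Fact.out
  obtain ⟨-, hcen2⟩ := hcen
  set x : Lp ℝ q μ := ∑ i, v i with hxdef
  -- measurable representatives of the `v i`
  have hmeas : ∀ i : Fin n, ∃ g : α → ℝ, Measurable g ∧ ⇑(v i) =ᵐ[μ] g := fun i =>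
    ⟨(Lp.aestronglyMeasurable (v i)).mk _,
      (Lp.aestronglyMeasurable (v i)).stronglyMeasurable_mk.measurable,
      (Lp.aestronglyMeasurable (v i)).ae_eq_mk⟩
  choose g hgm hge using hmeas
  -- the signed sums and the sign functions
  set S : (Fin n → Bool) → Lp ℝ q μ := fun ε => ∑ k, sgn ε k • v k with hSdef
  set fE : (Fin n → Bool) → α → ℝ :=
    fun ε a => ∑ i, Set.indicator {b | g i b ≠ 0} (fun _ => sgn ε i) a with hfEdef
  have hfEmeas : ∀ ε, Measurable (fE ε) := by
    intro ε
    apply Finset.measurable_sum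
    intro i _
    exact measurable_const.indicator ((hgm i (measurableSet_singleton 0)).compl)
  -- the master a.e. set
  have hpair : ∀ᵐ a ∂μ, ∀ i j, i ≠ j → (v i) a = 0 ∨ (v j) a = 0 := by
    rw [ae_all_iff]
    intro i
    rw [ae_all_iff]
    intro j
    by_cases hij : i = j
    · exact Filter.Eventually.of_forall fun a h => absurd hij h
    · exact (hdisj hij).mono fun a ha _ => ha
  have hSco : ∀ ε : Fin n → Bool, ⇑(S ε) =ᵐ[μ] fun a => ∑ i, sgn ε i * (v i) a := by
    intro ε
    have h2 : ∀ᵐ a ∂μ, ∀ k : Fin n, (sgn ε k • v k) a = sgn ε k * (v k) a := by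
      rw [ae_all_iff]
      intro k
      filter_upwards [Lp.coeFn_smul (sgn ε k) (v k)] with a ha
      simpa using ha
    filter_upwards [lp_coeFn_sum Finset.univ (fun k => sgn ε k • v k), h2] with a ha hb
    rw [hSdef]
    simp only [ha]
    exact Finset.sum_congr rfl fun k _ => hb k
  have hgood : ∀ᵐ a ∂μ,
      (∀ i, (v i) a = g i a) ∧
      (∀ i, (v i) a = 0 → (Ω (v i)) a = 0) ∧
      (∀ i j, i ≠ j → (v i) a = 0 ∨ (v j) a = 0) ∧
      ((x : Lp ℝ q μ) a = ∑ i, (v i) a) ∧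
      (∀ ε : Fin n → Bool, (S ε) a = ∑ i, sgn ε i * (v i) a) := by
    filter_upwards [ae_all_iff.2 hge, ae_all_iff.2 fun i => hcontr (v i), hpair,
      lp_coeFn_sum Finset.univ v, ae_all_iff.2 hSco] with a h1 h2 h3 h4 h5
    exact ⟨h1, h2, h3, h4, h5⟩
  -- value of `fE` on supports
  have hfEval : ∀ (ε : Fin n → Bool) a, (∀ j, (v j) a = g j a) →
      (∀ j k, j ≠ k → (v j) a = 0 ∨ (v k) a = 0) →
      ∀ i, (v i) a ≠ 0 → fE ε a = sgn ε i := by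
    intro ε a h1 h3 i hi
    have hgi : g i a ≠ 0 := by rw [← h1 i]; exact hi
    rw [hfEdef]
    simp only
    rw [Finset.sum_eq_single i]
    · exact Set.indicator_of_mem (by simpa [Set.mem_setOf_eq] using hgi) _
    · intro j _ hj
      have hvj : (v j) a = 0 := (h3 j i hj).resolve_right hi
      have hgj : g j a = 0 := by rw [← h1 j]; exact hvj
      exact Set.indicator_of_notMem (by simp [Set.mem_setOf_eq, hgj]) _
    · intro h; exact absurd (Finset.mem_univ i) h
  -- the key estimate for each choice of signs
  have key : ∀ ε : Fin n → Bool,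
      eLpNorm (⇑(Ω x - ∑ i, Ω (v i))) q μ ≤
        ENNReal.ofReal (CΩ * ‖x‖) +
          eLpNorm (⇑(Ω (S ε) - ∑ k, sgn ε k • Ω (v k))) q μ := by
    intro ε
    set F : α →ₘ[μ] ℝ := AEEqFun.mk (fE ε) (hfEmeas ε).aestronglyMeasurable with hFdef
    have hFco : ⇑F =ᵐ[μ] fE ε := AEEqFun.coeFn_mk _ _
    -- pointwise case analysis
    have hcase : ∀ᵐ a ∂μ,
        ((x : Lp ℝ q μ) a = 0 ∧ (S ε) a = 0 ∧ fE ε a = 0) ∨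
        (∃ i, (v i) a ≠ 0 ∧ x a = (v i) a ∧ (S ε) a = sgn ε i * (v i) a ∧
          fE ε a = sgn ε i) := by
      filter_upwards [hgood] with a ha
      obtain ⟨h1, h2, h3, h4, h5⟩ := ha
      by_cases hz : ∀ i, (v i) a = 0
      · left
        refine ⟨by rw [h4]; exact Finset.sum_eq_zero fun i _ => hz i,
          by rw [h5 ε]; exact Finset.sum_eq_zero fun i _ => by rw [hz i, mul_zero], ?_⟩
        rw [hfEdef]
        simp only
        refine Finset.sum_eq_zero fun i _ => ?_
        have hgi : g i a = 0 := by rw [← h1 i]; exact hz i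
        exact Set.indicator_of_notMem (by simp [Set.mem_setOf_eq, hgi]) _
      · push_neg at hz
        obtain ⟨i0, hi0⟩ := hz
        have huniq : ∀ j, j ≠ i0 → (v j) a = 0 := fun j hj => (h3 j i0 hj).resolve_right hi0
        refine Or.inr ⟨i0, hi0, ?_, ?_, hfEval ε a h1 h3 i0 hi0⟩
        · rw [h4, Finset.sum_eq_single i0 (fun j _ hj => huniq j hj)
            (fun h => absurd (Finset.mem_univ i0) h)]
        · rw [h5 ε, Finset.sum_eq_single i0 (fun j _ hj => by rw [huniq j hj, mul_zero])
            (fun h => absurd (Finset.mem_univ i0) h)]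
    have hFb : ∀ᵐ a ∂μ, ‖fE ε a‖ ≤ 1 := by
      filter_upwards [hcase] with a ha
      rcases ha with ⟨_, _, h⟩ | ⟨i, _, _, _, h⟩
      · simp [h]
      · rw [h, abs_sgn]
    have hFb' : ∀ᵐ a ∂μ, ‖(F : α → ℝ) a‖ ≤ 1 := by
      filter_upwards [hFco, hFb] with a h1 h2
      rw [h1]; exact h2
    have hFtop : eLpNorm (⇑F) ⊤ μ ≤ 1 := by
      rw [eLpNorm_exponent_top]
      simpa using eLpNormEssSup_le_of_ae_bound hFb'
    have hFmem : F ∈ Lp ℝ ⊤ μ :=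
      Lp.mem_Lp_iff_eLpNorm_lt_top.2 (lt_of_le_of_lt hFtop ENNReal.one_lt_top)
    -- x = F * S ε in L⁰
    have hxFS : ((x : Lp ℝ q μ) : α →ₘ[μ] ℝ) = F * ↑(S ε) := by
      apply AEEqFun.ext
      filter_upwards [hcase, AEEqFun.coeFn_mul F ↑(S ε), hFco] with a ha hmul hF
      show (x : Lp ℝ q μ) a = _
      rw [hmul, Pi.mul_apply, hF]
      rcases ha with ⟨h1, h2, h3⟩ | ⟨i, hi, h1, h2, h3⟩
      · show (x : Lp ℝ q μ) a = fE ε a * (S ε) a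
        rw [h1, h2, mul_zero]
      · show (x : Lp ℝ q μ) a = fE ε a * (S ε) a
        rw [h1, h2, h3, ← mul_assoc, sgn_mul_self, one_mul]
    have cen1 := hcen2 F hFmem (S ε) x hxFS
    -- ‖S ε‖ = ‖x‖
    have hSx : ‖S ε‖ = ‖x‖ := by
      rw [Lp.norm_def, Lp.norm_def]
      congr 1
      apply eLpNorm_congr_norm_ae
      filter_upwards [hcase] with a ha
      rcases ha with ⟨h1, h2, _⟩ | ⟨i, _, h1, h2, _⟩
      · rw [h1, h2]
      · rw [h1, h2, norm_mul, abs_sgn, one_mul]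
    have cbound : ENNReal.ofReal (CΩ * (eLpNorm (⇑F) ⊤ μ).toReal * ‖S ε‖) ≤
        ENNReal.ofReal (CΩ * ‖x‖) := by
      have ht0 : 0 ≤ (eLpNorm (⇑F) ⊤ μ).toReal := ENNReal.toReal_nonneg
      have ht1 : (eLpNorm (⇑F) ⊤ μ).toReal ≤ 1 := by
        have := ENNReal.toReal_mono (by norm_num : (1:ℝ≥0∞) ≠ ∞) hFtop
        simpa using this
      rcases le_or_gt 0 CΩ with hC | hC
      · apply ENNReal.ofReal_le_ofReal
        rw [hSx]
        have hxn : (0:ℝ) ≤ ‖x‖ := norm_nonneg _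
        nlinarith [mul_nonneg (mul_nonneg hC hxn) (sub_nonneg.2 ht1)]
      · have hneg : CΩ * (eLpNorm (⇑F) ⊤ μ).toReal * ‖S ε‖ ≤ 0 := by
          rw [mul_assoc]
          exact mul_nonpos_of_nonpos_of_nonneg hC.le (mul_nonneg ht0 (norm_nonneg _))
        rw [ENNReal.ofReal_eq_zero.2 hneg]
        exact zero_le
    -- F absorbs the signs on the Ω(v i), pointwise
    have hFΩae : ∀ᵐ a ∂μ, ∀ i, (F : α → ℝ) a * (Ω (v i)) a = sgn ε i * (Ω (v i)) a := by
      filter_upwards [hgood, hFco] with a ha hF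
      obtain ⟨p1, p2, p3, _, _⟩ := ha
      intro i
      by_cases hv : (v i) a = 0
      · rw [p2 i hv, mul_zero, mul_zero]
      · rw [hF, hfEval ε a p1 p3 i hv]
    -- the algebraic identity, pointwise a.e.
    have hid : ⇑(Ω x - ∑ i, Ω (v i)) =ᵐ[μ]
        ⇑(Ω x - F * Ω (S ε)) + ⇑(F * (Ω (S ε) - ∑ k, sgn ε k • Ω (v k))) := by
      have hsmul : ∀ᵐ a ∂μ, ∀ k : Fin n, (sgn ε k • Ω (v k)) a = sgn ε k * (Ω (v k)) a := by
        rw [ae_all_iff]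
        intro k
        filter_upwards [AEEqFun.coeFn_smul (sgn ε k) (Ω (v k))] with a ha
        simpa using ha
      filter_upwards [AEEqFun.coeFn_sub (Ω x) (∑ i, Ω (v i)),
        aeeqfun_coeFn_sum Finset.univ (fun i => Ω (v i)),
        AEEqFun.coeFn_sub (Ω x) (F * Ω (S ε)),
        AEEqFun.coeFn_mul F (Ω (S ε)),
        AEEqFun.coeFn_mul F (Ω (S ε) - ∑ k, sgn ε k • Ω (v k)),
        AEEqFun.coeFn_sub (Ω (S ε)) (∑ k, sgn ε k • Ω (v k)),
        aeeqfun_coeFn_sum Finset.univ (fun k => sgn ε k • Ω (v k)),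
        hsmul, hFΩae] with a h1 h2 h3 h4 h5 h6 h7 h8 h9
      simp only [Pi.add_apply, h1, h2, h3, h4, h5, h6, h7, Pi.sub_apply, Pi.mul_apply]
      have hkey : (F : α → ℝ) a * ∑ k, (sgn ε k • Ω (v k)) a = ∑ k, (Ω (v k)) a := by
        rw [Finset.mul_sum]
        refine Finset.sum_congr rfl fun k _ => ?_
        rw [h8 k, mul_left_comm, h9 k, ← mul_assoc, sgn_mul_self, one_mul]
      rw [mul_sub, hkey]
      ring
    -- bounding the product term
    have hmul2 : eLpNorm (⇑(F * (Ω (S ε) - ∑ k, sgn ε k • Ω (v k)))) q μ ≤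
        eLpNorm (⇑(Ω (S ε) - ∑ k, sgn ε k • Ω (v k))) q μ := by
      apply eLpNorm_mono_ae
      filter_upwards [AEEqFun.coeFn_mul F (Ω (S ε) - ∑ k, sgn ε k • Ω (v k)), hFb']
        with a hm hb
      rw [hm, Pi.mul_apply, norm_mul]
      calc ‖(F : α → ℝ) a‖ * ‖(Ω (S ε) - ∑ k, sgn ε k • Ω (v k)) a‖ ≤
          1 * ‖(Ω (S ε) - ∑ k, sgn ε k • Ω (v k)) a‖ :=
            mul_le_mul_of_nonneg_right hb (norm_nonneg _)
        _ = _ := one_mul _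
    calc eLpNorm (⇑(Ω x - ∑ i, Ω (v i))) q μ
        = eLpNorm (⇑(Ω x - F * Ω (S ε)) +
            ⇑(F * (Ω (S ε) - ∑ k, sgn ε k • Ω (v k)))) q μ := eLpNorm_congr_ae hid
      _ ≤ eLpNorm (⇑(Ω x - F * Ω (S ε))) q μ +
          eLpNorm (⇑(F * (Ω (S ε) - ∑ k, sgn ε k • Ω (v k)))) q μ :=
          eLpNorm_add_le (AEEqFun.aestronglyMeasurable _)
            (AEEqFun.aestronglyMeasurable _) hq1
      _ ≤ ENNReal.ofReal (CΩ * ‖x‖) +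
          eLpNorm (⇑(Ω (S ε) - ∑ k, sgn ε k • Ω (v k))) q μ :=
          add_le_add (cen1.trans cbound) hmul2
  -- averaging over all signs
  set L := eLpNorm (⇑(Ω x - ∑ i, Ω (v i))) q μ with hLdef
  set A := ENNReal.ofReal (CΩ * ‖x‖) with hAdef
  set N : (Fin n → Bool) → ℝ≥0∞ :=
    fun ε => eLpNorm (⇑(Ω (S ε) - ∑ k, sgn ε k • Ω (v k))) q μ with hNdef
  have hnab : nabla Ω v = (2 ^ n : ℝ≥0∞)⁻¹ * ∑ ε : Fin n → Bool, N ε := nabla_eq Ω v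
  have h2n0 : (2 ^ n : ℝ≥0∞) ≠ 0 := pow_ne_zero n (by norm_num)
  have h2nt : (2 ^ n : ℝ≥0∞) ≠ ∞ := ENNReal.pow_ne_top (by norm_num)
  have hcard : ((Finset.univ : Finset (Fin n → Bool)).card : ℝ≥0∞) = 2 ^ n := by
    rw [Finset.card_univ]
    simp [Fintype.card_fun]
  have hL2 : (2 ^ n : ℝ≥0∞) * L ≤ (2 ^ n : ℝ≥0∞) * A + ∑ ε : Fin n → Bool, N ε := by
    calc (2 ^ n : ℝ≥0∞) * L = ∑ _ε : Fin n → Bool, L := by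
          rw [Finset.sum_const, nsmul_eq_mul, hcard]
      _ ≤ ∑ ε : Fin n → Bool, (A + N ε) := Finset.sum_le_sum fun ε _ => key ε
      _ = (2 ^ n : ℝ≥0∞) * A + ∑ ε : Fin n → Bool, N ε := by
          rw [Finset.sum_add_distrib, Finset.sum_const, nsmul_eq_mul, hcard]
  calc L = (2 ^ n : ℝ≥0∞)⁻¹ * ((2 ^ n : ℝ≥0∞) * L) := by
        rw [← mul_assoc, ENNReal.inv_mul_cancel h2n0 h2nt, one_mul]
    _ ≤ (2 ^ n : ℝ≥0∞)⁻¹ * ((2 ^ n : ℝ≥0∞) * A + ∑ ε : Fin n → Bool, N ε) :=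
        mul_le_mul_right hL2 _
    _ = A + (2 ^ n : ℝ≥0∞)⁻¹ * ∑ ε : Fin n → Bool, N ε := by
        rw [mul_add, ← mul_assoc, ENNReal.inv_mul_cancel h2n0 h2nt, one_mul]
    _ = A + nabla Ω v := by rw [hnab]
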